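/- Let n ≥ 2 and let G = ⟨a, b | (ab)^n⟩. Suppose v is a nonempty cyclically reduced, cyclically alternating word in {a,b} (i.e., letters with base a and base b alternate around the cyclic word) such that every maximal block of consecutive letters of v (read cyclically) having the same exponent sign has length at most n. Then v represents a nontrivial element of G. -/

import Mathlib

/-- A letter: (`false` = a, `true` = b, sign `true` = +1). -/
abbrev Letter : Type := Bool × Bool

/-- The relator (ab)^n. -/
def heckoidRel (n : ℕ) : FreeGroup Bool :=
  (FreeGroup.of false * FreeGroup.of true) ^ n

/-- The one-relator group G = ⟨a, b | (ab)^n⟩. -/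
abbrev HeckoidGroup (n : ℕ) : Type :=
  PresentedGroup ({heckoidRel n} : Set (FreeGroup Bool))

namespace AltWordProof

abbrev Mi (n : ℕ) : Bool → Type := fun i => Multiplicative (ZMod (cond i n 0))

abbrev FP (n : ℕ) : Type := Monoid.CoprodI (Mi n)

def elem (n : ℕ) (p : Bool × ℤ) : Mi n p.1 := Multiplicative.ofAdd ((p.2 : ZMod (cond p.1 n 0)))

def sg (n : ℕ) (p : Bool × ℤ) : FP n := Monoid.CoprodI.of (elem n p)

lemma sg_mul (n : ℕ) (i : Bool) (x y : ℤ) :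
    sg n (i, x) * sg n (i, y) = sg n (i, x + y) := by
  rw [sg, sg, sg, ← map_mul]
  congr 1
  rw [elem, elem, elem, ← ofAdd_add]
  push_cast
  rfl

lemma sg_zero (n : ℕ) (i : Bool) : sg n (i, 0) = 1 := by
  rw [sg, elem]
  simp

lemma sg_inv (n : ℕ) (i : Bool) (x : ℤ) : (sg n (i, x))⁻¹ = sg n (i, -x) := by
  rw [eq_comm, eq_inv_iff_mul_eq_one, sg_mul]
  simp [sg_zero]

lemma sg_pow (n : ℕ) (i : Bool) (x : ℤ) (m : ℕ) :
    (sg n (i, x)) ^ m = sg n (i, m * x) := by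
  induction m with
  | zero => simp [sg_zero]
  | succ m ih =>
    rw [pow_succ, ih, sg_mul]
    congr 2
    push_cast; ring

def prodW (n : ℕ) (W : List (Bool × ℤ)) : FP n := (W.map (sg n)).prod

lemma elem_ne_one (n : ℕ) (hn : 2 ≤ n) (p : Bool × ℤ) (h0 : p.2 ≠ 0)
    (hb : p.1 = true → p.2.natAbs < n) : elem n p ≠ 1 := by
  rw [elem, Ne, ← ofAdd_zero]
  intro h
  have h2 : ((p.2 : ZMod (cond p.1 n 0))) = 0 := Multiplicative.ofAdd.injective h
  rw [ZMod.intCast_zmod_eq_zero_iff_dvd] at h2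
  rcases p with ⟨i, x⟩
  cases i
  · simp only [cond] at h2
    exact h0 (by exact_mod_cast (zero_dvd_iff.mp (by exact_mod_cast h2)))
  · have hlt := hb rfl
    have hdvd : (n : ℤ) ∣ x := by exact_mod_cast h2
    have : n ∣ x.natAbs := Int.ofNat_dvd.mp (by rwa [Int.dvd_natAbs])
    have hpos : 0 < x.natAbs := Int.natAbs_pos.mpr h0
    exact absurd (Nat.le_of_dvd hpos this) (by omega)

lemma prodW_ne_one (n : ℕ) (hn : 2 ≤ n) (W : List (Bool × ℤ)) (hW : W ≠ [])
    (hchain : W.Chain' (fun p q => p.1 ≠ q.1))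
    (hval : ∀ p ∈ W, p.2 ≠ 0 ∧ (p.1 = true → p.2.natAbs < n)) :
    prodW n W ≠ 1 := by
  classical
  set w : Monoid.CoprodI.Word (Mi n) :=
    { toList := W.map fun p => ⟨p.1, elem n p⟩
      ne_one := by
        intro l hl
        rw [List.mem_map] at hl
        obtain ⟨p, hp, rfl⟩ := hl
        exact elem_ne_one n hn p (hval p hp).1 (hval p hp).2
      chain_ne := by
        rw [List.isChain_map]
        exact hchain } with hw
  have hprod : w.prod = prodW n W := by
    rw [Monoid.CoprodI.Word.prod, hw]
    simp only [List.map_map]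
    rfl
  intro h
  have h1 : w.prod = (Monoid.CoprodI.Word.empty : Monoid.CoprodI.Word (Mi n)).prod := by
    rw [hprod, h, Monoid.CoprodI.Word.prod_empty]
  have h2 : w = Monoid.CoprodI.Word.empty := by
    have := (Monoid.CoprodI.Word.equiv (M := Mi n)).symm.injective (a₁ := w)
      (a₂ := Monoid.CoprodI.Word.empty) h1
    exact this
  have h3 := congrArg Monoid.CoprodI.Word.toList h2
  rw [hw] at h3
  simp only [Monoid.CoprodI.Word.empty] at h3
  exact hW (List.map_eq_nil_iff.mp h3)

def push (p : Bool × ℤ) : List (Bool × ℤ) → List (Bool × ℤ)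
  | [] => [p]
  | q :: t => if p.1 = q.1 then (if p.2 + q.2 = 0 then t else (p.1, p.2 + q.2) :: t) else p :: q :: t

lemma push_nil (p : Bool × ℤ) : push p [] = [p] := rfl

lemma push_cons_ne (p q : Bool × ℤ) (t : List (Bool × ℤ)) (h : p.1 ≠ q.1) :
    push p (q :: t) = p :: q :: t := by simp [push, h]

lemma push_cons_merge (p q : Bool × ℤ) (t : List (Bool × ℤ)) (h : p.1 = q.1)
    (h0 : p.2 + q.2 ≠ 0) : push p (q :: t) = (p.1, p.2 + q.2) :: t := by simp [push, h, h0]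

lemma push_cons_cancel (p q : Bool × ℤ) (t : List (Bool × ℤ)) (h : p.1 = q.1)
    (h0 : p.2 + q.2 = 0) : push p (q :: t) = t := by simp [push, h, h0]

lemma prodW_cons (n : ℕ) (p : Bool × ℤ) (W : List (Bool × ℤ)) :
    prodW n (p :: W) = sg n p * prodW n W := by simp [prodW]

lemma prodW_nil (n : ℕ) : prodW n [] = 1 := rfl

lemma push_prod (n : ℕ) (p : Bool × ℤ) (W : List (Bool × ℤ)) :
    prodW n (push p W) = sg n p * prodW n W := by
  rcases W with _ | ⟨⟨i, y⟩, t⟩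
  · simp [push, prodW]
  · rcases p with ⟨j, x⟩
    by_cases h : j = i
    · subst h
      by_cases h0 : x + y = 0
      · rw [push_cons_cancel (j,x) (j,y) t rfl h0, prodW_cons, ← mul_assoc, sg_mul,
          h0, sg_zero, one_mul]
      · rw [push_cons_merge (j,x) (j,y) t rfl h0, prodW_cons, prodW_cons,
          ← mul_assoc, sg_mul]
    · rw [push_cons_ne (j,x) (i,y) t h, prodW_cons]

def pushPair (g : Bool × Bool) (w : List (Bool × ℤ)) : List (Bool × ℤ) :=
  match g with
  | (true, true) => push (true, 1) w
  | (true, false) => push (false, 1) (push (true, -1) (push (false, 1) w))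
  | (false, true) => push (false, -2) (push (true, 1) w)
  | (false, false) => push (false, -1) (push (true, -1) (push (false, 1) w))

def WL (P : List (Bool × Bool)) : List (Bool × ℤ) := P.foldr pushPair []

/-- image of the pair of letters a^e b^f -/
def imgPair (n : ℕ) (g : Bool × Bool) : FP n :=
  match g with
  | (true, true) => sg n (true, 1)
  | (true, false) => sg n (false, 1) * (sg n (true, -1) * sg n (false, 1))
  | (false, true) => sg n (false, -2) * sg n (true, 1)
  | (false, false) => sg n (false, -1) * (sg n (true, -1) * sg n (false, 1))

lemma pushPair_prod (n : ℕ) (g : Bool × Bool) (W : List (Bool × ℤ)) :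
    prodW n (pushPair g W) = imgPair n g * prodW n W := by
  rcases g with ⟨e, f⟩
  rcases e <;> rcases f <;>
    simp only [pushPair, imgPair, push_prod, mul_assoc]

lemma WL_prod (n : ℕ) (P : List (Bool × Bool)) :
    prodW n (WL P) = (P.map (imgPair n)).prod := by
  induction P with
  | nil => rfl
  | cons g P ih => rw [WL, List.foldr_cons, pushPair_prod, ← WL, ih, List.map_cons,
      List.prod_cons]

def fgen (n : ℕ) : Bool → FP n :=
  fun i => cond i (sg n (false, -1) * sg n (true, 1)) (sg n (false, 1))

lemma lift_relator (n : ℕ) : FreeGroup.lift (fgen n) (heckoidRel n) = 1 := by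
  rw [heckoidRel, map_pow, map_mul, FreeGroup.lift_apply_of, FreeGroup.lift_apply_of]
  have h1 : fgen n false * fgen n true = sg n (true, 1) := by
    rw [fgen, fgen]
    show sg n (false, 1) * (sg n (false, -1) * sg n (true, 1)) = _
    rw [← mul_assoc, sg_mul]
    norm_num [sg_zero]
  rw [h1, sg_pow]
  have : ((n : ℤ) * 1 : ℤ) = (n : ℤ) := by ring
  rw [this]
  rw [sg, elem]
  have : (((n : ℤ) : ZMod (cond true n 0))) = 0 := by
    simp [ZMod.natCast_self]
  rw [this]
  simp

def phi (n : ℕ) : HeckoidGroup n →* FP n :=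
  PresentedGroup.toGroup (f := fgen n) (by
    rintro r hr
    rw [Set.mem_singleton_iff] at hr
    subst hr
    exact lift_relator n)

lemma phi_mk (n : ℕ) (x : FreeGroup Bool) :
    phi n (PresentedGroup.mk ({heckoidRel n} : Set (FreeGroup Bool)) x) =
      FreeGroup.lift (fgen n) x := by
  have h : (phi n).comp (PresentedGroup.mk ({heckoidRel n} : Set (FreeGroup Bool))) =
      FreeGroup.lift (fgen n) := by
    apply FreeGroup.ext_hom
    intro a
    simp only [MonoidHom.comp_apply, FreeGroup.lift_apply_of]
    exact PresentedGroup.toGroup.of _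
  exact DFunLike.congr_fun h x

/-- flatten a list of sign pairs into the letter list (a^e b^f)... -/
def flat : List (Bool × Bool) → List Letter
  | [] => []
  | g :: P => (false, g.1) :: (true, g.2) :: flat P

def sgn : List (Bool × Bool) → List Bool
  | [] => []
  | g :: P => g.1 :: g.2 :: sgn P

lemma sgn_eq (P : List (Bool × Bool)) : sgn P = (flat P).map Prod.snd := by
  induction P with
  | nil => rfl
  | cons g P ih => simp [sgn, flat, ih]

lemma pair_mul (n : ℕ) (e f : Bool) :
    (cond e (fgen n false) (fgen n false)⁻¹) * (cond f (fgen n true) (fgen n true)⁻¹) =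
      imgPair n (e, f) := by
  rcases e <;> rcases f <;>
    simp only [cond, fgen, imgPair, mul_inv_rev, sg_inv, neg_neg, ← mul_assoc, sg_mul] <;>
    norm_num [sg_zero, sg_mul, mul_assoc]

lemma lift_flat (n : ℕ) (P : List (Bool × Bool)) :
    FreeGroup.lift (fgen n) (FreeGroup.mk (flat P)) = (P.map (imgPair n)).prod := by
  rw [FreeGroup.lift_mk]
  induction P with
  | nil => rfl
  | cons g P ih =>
    rcases g with ⟨e, f⟩
    rw [flat, List.map_cons, List.map_cons, List.prod_cons, List.prod_cons, ← mul_assoc]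
    show (cond e (fgen n false) (fgen n false)⁻¹) * (cond f (fgen n true) (fgen n true)⁻¹) *
      ((flat P).map fun x => cond x.2 (fgen n x.1) (fgen n x.1)⁻¹).prod = _
    rw [pair_mul, ih, List.map_cons, List.prod_cons]

theorem pairing : ∀ l : List Letter, l.Chain' (fun x y => x.1 ≠ y.1) →
    (∀ x ∈ l.head?, x.1 = false) →
    (∃ P, l = flat P) ∨ (∃ P e, l = flat P ++ [(false, e)])
  | [] => fun _ _ => Or.inl ⟨[], rfl⟩
  | [(xb, xs)] => by
    intro _ hh
    have hx : xb = false := hh (xb, xs) rfl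
    subst hx
    exact Or.inr ⟨[], xs, rfl⟩
  | (xb, xs) :: (yb, ys) :: l => by
    intro hc hh
    have hx : xb = false := hh (xb, xs) rfl
    subst hx
    simp only [List.Chain'] at hc; rw [List.isChain_cons_cons] at hc
    have hy : yb = true := by
      cases hb : yb
      · exact absurd (by rw [hb]) hc.1
      · rfl
    subst hy
    have hc2 := hc.2
    rw [List.isChain_cons] at hc2
    have hl : ∀ z ∈ l.head?, z.1 = false := by
      intro z hz
      have := hc2.1 z hz
      cases hb : z.1
      · rfl
      · exact absurd (by rw [hb]) (Ne.symm this)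
    rcases pairing l hc2.2 hl with ⟨P, rfl⟩ | ⟨P, e, rfl⟩
    · exact Or.inl ⟨(xs, ys) :: P, rfl⟩
    · exact Or.inr ⟨(xs, ys) :: P, e, rfl⟩

/-- transfer nontriviality along rotation -/
lemma mk_rotate_conj (rels : Set (FreeGroup Bool)) (v : List Letter) (k : ℕ) (hk : k ≤ v.length)
    (h : PresentedGroup.mk rels (FreeGroup.mk v) = 1) :
    PresentedGroup.mk rels (FreeGroup.mk (v.rotate k)) = 1 := by
  rw [List.rotate_eq_drop_append_take hk]
  rw [← FreeGroup.mul_mk, map_mul]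
  have hv : FreeGroup.mk v = FreeGroup.mk (v.take k) * FreeGroup.mk (v.drop k) := by
    rw [FreeGroup.mul_mk, List.take_append_drop]
  rw [hv, map_mul] at h
  have : PresentedGroup.mk rels (FreeGroup.mk (v.drop k)) =
      (PresentedGroup.mk rels (FreeGroup.mk (v.take k)))⁻¹ := by
    rw [eq_inv_iff_mul_eq_one]
    rw [eq_comm] at h
    calc PresentedGroup.mk rels (FreeGroup.mk (v.drop k)) *
          PresentedGroup.mk rels (FreeGroup.mk (v.take k))
        = (PresentedGroup.mk rels (FreeGroup.mk (v.take k)))⁻¹ *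
          (PresentedGroup.mk rels (FreeGroup.mk (v.take k)) *
           PresentedGroup.mk rels (FreeGroup.mk (v.drop k))) *
          PresentedGroup.mk rels (FreeGroup.mk (v.take k)) := by group
      _ = _ := by rw [← h]; group
  rw [this, inv_mul_cancel]

lemma WL_cons (g : Bool × Bool) (P : List (Bool × Bool)) : WL (g :: P) = pushPair g (WL P) := rfl

lemma sgn_cons (g : Bool × Bool) (P : List (Bool × Bool)) : sgn (g :: P) = g.1 :: g.2 :: sgn P := rfl

def Ok (n : ℕ) (W : List (Bool × ℤ)) : Prop :=
  W.Chain' (fun p q => p.1 ≠ q.1) ∧ ∀ p ∈ W, p.2 ≠ 0 ∧ (p.1 = true → p.2.natAbs < n)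

def Shape : List (Bool × Bool) → List (Bool × ℤ) → Prop
  | [], W => W = []
  | g :: P, W =>
    ∃ (c : ℕ) (T : List (Bool × ℤ)), 1 ≤ c ∧
      (match g with
      | (true, true) => W = (true, (c : ℤ)) :: T ∧
          (sgn (g :: P)).take (2 * c) = List.replicate (2 * c) true
      | (true, false) => W = (false, 1) :: (true, -(c : ℤ)) :: T ∧
          ((sgn (g :: P)).drop 1).take (2 * c - 1) = List.replicate (2 * c - 1) false
      | (false, true) => W = (false, -2) :: (true, (c : ℤ)) :: T ∧
          ((sgn (g :: P)).drop 1).take (2 * c - 1) = List.replicate (2 * c - 1) true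
      | (false, false) => W = (false, -1) :: (true, -(c : ℤ)) :: T ∧
          (sgn (g :: P)).take (2 * c) = List.replicate (2 * c) false)

lemma chain'_shift {T : List (Bool × ℤ)} {i : Bool} {x y : ℤ}
    (h : List.Chain' (fun p q : Bool × ℤ => p.1 ≠ q.1) ((i, x) :: T)) :
    List.Chain' (fun p q : Bool × ℤ => p.1 ≠ q.1) ((i, y) :: T) := by
  rcases T with _ | ⟨q, T⟩
  · exact List.isChain_singleton _
  · simp only [List.Chain'] at h ⊢; rw [List.isChain_cons_cons] at h ⊢; exact h

theorem main (n : ℕ) (hn : 2 ≤ n) (P : List (Bool × Bool))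
    (hSL : ∀ j r (s : Bool), ((sgn P).drop j).take r = List.replicate r s → r ≤ n) :
    Ok n (WL P) ∧ Shape P (WL P) := by
  induction P with
  | nil => exact ⟨⟨List.isChain_nil, by intro p hp; simp [WL] at hp⟩, rfl⟩
  | cons g P ih =>
    have hSL' : ∀ j r (s : Bool), ((sgn P).drop j).take r = List.replicate r s → r ≤ n := by
      intro j r s h
      refine hSL (j + 2) r s ?_
      have hd : (sgn (g :: P)).drop (j + 2) = (sgn P).drop j := by
        rw [sgn_cons]
        show (g.1 :: g.2 :: sgn P).drop (j + 1 + 1) = _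
        rw [List.drop_succ_cons, List.drop_succ_cons]
      rw [hd]; exact h
    obtain ⟨⟨hch, hval⟩, hsh⟩ := ih hSL'
    rcases P with _ | ⟨g', P'⟩
    · clear hch hval hsh hSL'
      rcases g with ⟨e, f⟩
      cases e <;> cases f
      · -- base g = (false, false)
        have hW : WL [(false, false)] = [(false, -1), (true, -1), (false, 1)] := by simp [WL, pushPair, push]
        rw [hW]
        refine ⟨⟨?_, ?_⟩, 1, [(false, 1)], by omega, ?_, ?_⟩
        · simp [List.Chain', List.isChain_cons_cons]
        · intro p hp
          simp only [List.mem_cons] at hp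
          rcases hp with rfl | rfl | rfl | hp
          · exact ⟨by norm_num, by simp⟩
          · exact ⟨by norm_num, fun _ => by norm_num; omega⟩
          · exact ⟨by norm_num, by simp⟩
          · simp at hp
        · norm_num
        · rfl
      · -- base g = (false, true)
        have hW : WL [(false, true)] = [(false, -2), (true, 1)] := by simp [WL, pushPair, push]
        rw [hW]
        refine ⟨⟨?_, ?_⟩, 1, ([] : List (Bool × ℤ)), by omega, ?_, ?_⟩
        · simp [List.Chain', List.isChain_cons_cons]
        · intro p hp
          simp only [List.mem_cons] at hp
          rcases hp with rfl | rfl | hp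
          · exact ⟨by norm_num, by simp⟩
          · exact ⟨by norm_num, fun _ => by norm_num; omega⟩
          · simp at hp
        · norm_num
        · rfl
      · -- base g = (true, false)
        have hW : WL [(true, false)] = [(false, 1), (true, -1), (false, 1)] := by simp [WL, pushPair, push]
        rw [hW]
        refine ⟨⟨?_, ?_⟩, 1, [(false, 1)], by omega, ?_, ?_⟩
        · simp [List.Chain', List.isChain_cons_cons]
        · intro p hp
          simp only [List.mem_cons] at hp
          rcases hp with rfl | rfl | rfl | hp
          · exact ⟨by norm_num, by simp⟩
          · exact ⟨by norm_num, fun _ => by norm_num; omega⟩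
          · exact ⟨by norm_num, by simp⟩
          · simp at hp
        · norm_num
        · rfl
      · -- base g = (true, true)
        have hW : WL [(true, true)] = [(true, 1)] := by simp [WL, pushPair, push]
        rw [hW]
        refine ⟨⟨?_, ?_⟩, 1, ([] : List (Bool × ℤ)), by omega, ?_, ?_⟩
        · simp [List.Chain', List.isChain_cons_cons]
        · intro p hp
          simp only [List.mem_cons] at hp
          rcases hp with rfl | hp
          · exact ⟨by norm_num, fun _ => by norm_num; omega⟩
          · simp at hp
        · norm_num
        · rfl
    · rcases g with ⟨e, f⟩; rcases g' with ⟨e', f'⟩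
      cases e <;> cases f <;> cases e' <;> cases f'
      · -- g = (false, false), g' = (false, false)
        obtain ⟨c', T', hc', heq, hrep⟩ := hsh
        rw [heq] at hch hval
        rw [WL_cons, heq]
        have h0 : (-1 : ℤ) + -(c' : ℤ) ≠ 0 := by omega
        have hW : pushPair (false, false) ((false, -1) :: (true, -(c' : ℤ)) :: T') =
            (false, -1) :: (true, -((c' + 1 : ℕ) : ℤ)) :: T' := by simp [pushPair, push, h0] <;> omega
        rw [hW]
        have hrepL : (sgn ((false, false) :: (false, false) :: P')).take (2 * (c' + 1)) =
            List.replicate (2 * (c' + 1)) false := by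
          have e1 : 2 * (c' + 1) = 2 * c' + 1 + 1 := by ring
          rw [e1]
          simp only [sgn_cons] at hrep ⊢
          simp [List.take_succ_cons, List.replicate_succ, hrep]
        have hb : 2 * (c' + 1) ≤ n := hSL 0 (2 * (c' + 1)) false (by simpa using hrepL)
        refine ⟨⟨?_, ?_⟩, c' + 1, T', by omega, ?_, ?_⟩
        · exact List.isChain_cons_cons.mpr ⟨by simp, chain'_shift (List.isChain_cons_cons.mp hch).2⟩
        · intro p hp
          rcases List.mem_cons.mp hp with rfl | hp
          · exact ⟨by norm_num, by simp⟩
          rcases List.mem_cons.mp hp with rfl | hp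
          · exact ⟨by omega, fun _ => by omega⟩
          exact hval p (by simp [hp])
        · rfl
        · exact hrepL
      · -- g = (false, false), g' = (false, true)
        obtain ⟨c', T', hc', heq, hrep⟩ := hsh
        rw [heq] at hch hval
        rw [WL_cons, heq]
        have hW : pushPair (false, false) ((false, -2) :: (true, (c' : ℤ)) :: T') =
            (false, -1) :: (true, -1) :: (false, -1) :: (true, (c' : ℤ)) :: T' := by simp [pushPair, push]
        rw [hW]
        refine ⟨⟨?_, ?_⟩, 1, (false, -1) :: (true, (c' : ℤ)) :: T', by omega, ?_, ?_⟩
        · exact List.isChain_cons_cons.mpr ⟨by simp, List.isChain_cons_cons.mpr ⟨by simp, List.isChain_cons_cons.mpr ⟨by simp, (List.isChain_cons_cons.mp hch).2⟩⟩⟩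
        · intro p hp
          rcases List.mem_cons.mp hp with rfl | hp
          · exact ⟨by norm_num, by simp⟩
          rcases List.mem_cons.mp hp with rfl | hp
          · exact ⟨by norm_num, fun _ => by norm_num; omega⟩
          rcases List.mem_cons.mp hp with rfl | hp
          · exact ⟨by norm_num, by simp⟩
          rcases List.mem_cons.mp hp with rfl | hp
          · exact hval _ (by simp)
          exact hval p (by simp [hp])
        · norm_num
        · rfl
      · -- g = (false, false), g' = (true, false)
        obtain ⟨c', T', hc', heq, hrep⟩ := hsh
        rw [heq] at hch hval
        rw [WL_cons, heq]
        have hW : pushPair (false, false) ((false, 1) :: (true, -(c' : ℤ)) :: T') =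
            (false, -1) :: (true, -1) :: (false, 2) :: (true, -(c' : ℤ)) :: T' := by simp [pushPair, push]
        rw [hW]
        refine ⟨⟨?_, ?_⟩, 1, (false, 2) :: (true, -(c' : ℤ)) :: T', by omega, ?_, ?_⟩
        · exact List.isChain_cons_cons.mpr ⟨by simp, List.isChain_cons_cons.mpr ⟨by simp, List.isChain_cons_cons.mpr ⟨by simp, (List.isChain_cons_cons.mp hch).2⟩⟩⟩
        · intro p hp
          rcases List.mem_cons.mp hp with rfl | hp
          · exact ⟨by norm_num, by simp⟩
          rcases List.mem_cons.mp hp with rfl | hp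
          · exact ⟨by norm_num, fun _ => by norm_num; omega⟩
          rcases List.mem_cons.mp hp with rfl | hp
          · exact ⟨by norm_num, by simp⟩
          rcases List.mem_cons.mp hp with rfl | hp
          · exact hval _ (by simp)
          exact hval p (by simp [hp])
        · norm_num
        · rfl
      · -- g = (false, false), g' = (true, true)
        obtain ⟨c', T', hc', heq, hrep⟩ := hsh
        rw [heq] at hch hval
        rw [WL_cons, heq]
        have hW : pushPair (false, false) ((true, (c' : ℤ)) :: T') =
            (false, -1) :: (true, -1) :: (false, 1) :: (true, (c' : ℤ)) :: T' := by simp [pushPair, push]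
        rw [hW]
        refine ⟨⟨?_, ?_⟩, 1, (false, 1) :: (true, (c' : ℤ)) :: T', by omega, ?_, ?_⟩
        · exact List.isChain_cons_cons.mpr ⟨by simp, List.isChain_cons_cons.mpr ⟨by simp, List.isChain_cons_cons.mpr ⟨by simp, hch⟩⟩⟩
        · intro p hp
          rcases List.mem_cons.mp hp with rfl | hp
          · exact ⟨by norm_num, by simp⟩
          rcases List.mem_cons.mp hp with rfl | hp
          · exact ⟨by norm_num, fun _ => by norm_num; omega⟩
          rcases List.mem_cons.mp hp with rfl | hp
          · exact ⟨by norm_num, by simp⟩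
          rcases List.mem_cons.mp hp with rfl | hp
          · exact hval _ (by simp)
          exact hval p (by simp [hp])
        · norm_num
        · rfl
      · -- g = (false, true), g' = (false, false)
        obtain ⟨c', T', hc', heq, hrep⟩ := hsh
        rw [heq] at hch hval
        rw [WL_cons, heq]
        have hW : pushPair (false, true) ((false, -1) :: (true, -(c' : ℤ)) :: T') =
            (false, -2) :: (true, 1) :: (false, -1) :: (true, -(c' : ℤ)) :: T' := by simp [pushPair, push]
        rw [hW]
        refine ⟨⟨?_, ?_⟩, 1, (false, -1) :: (true, -(c' : ℤ)) :: T', by omega, ?_, ?_⟩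
        · exact List.isChain_cons_cons.mpr ⟨by simp, List.isChain_cons_cons.mpr ⟨by simp, hch⟩⟩
        · intro p hp
          rcases List.mem_cons.mp hp with rfl | hp
          · exact ⟨by norm_num, by simp⟩
          rcases List.mem_cons.mp hp with rfl | hp
          · exact ⟨by norm_num, fun _ => by norm_num; omega⟩
          rcases List.mem_cons.mp hp with rfl | hp
          · exact ⟨by norm_num, by simp⟩
          rcases List.mem_cons.mp hp with rfl | hp
          · exact hval _ (by simp)
          exact hval p (by simp [hp])
        · norm_num
        · rfl
      · -- g = (false, true), g' = (false, true)
        obtain ⟨c', T', hc', heq, hrep⟩ := hsh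
        rw [heq] at hch hval
        rw [WL_cons, heq]
        have hW : pushPair (false, true) ((false, -2) :: (true, (c' : ℤ)) :: T') =
            (false, -2) :: (true, 1) :: (false, -2) :: (true, (c' : ℤ)) :: T' := by simp [pushPair, push]
        rw [hW]
        refine ⟨⟨?_, ?_⟩, 1, (false, -2) :: (true, (c' : ℤ)) :: T', by omega, ?_, ?_⟩
        · exact List.isChain_cons_cons.mpr ⟨by simp, List.isChain_cons_cons.mpr ⟨by simp, hch⟩⟩
        · intro p hp
          rcases List.mem_cons.mp hp with rfl | hp
          · exact ⟨by norm_num, by simp⟩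
          rcases List.mem_cons.mp hp with rfl | hp
          · exact ⟨by norm_num, fun _ => by norm_num; omega⟩
          rcases List.mem_cons.mp hp with rfl | hp
          · exact ⟨by norm_num, by simp⟩
          rcases List.mem_cons.mp hp with rfl | hp
          · exact hval _ (by simp)
          exact hval p (by simp [hp])
        · norm_num
        · rfl
      · -- g = (false, true), g' = (true, false)
        obtain ⟨c', T', hc', heq, hrep⟩ := hsh
        rw [heq] at hch hval
        rw [WL_cons, heq]
        have hW : pushPair (false, true) ((false, 1) :: (true, -(c' : ℤ)) :: T') =
            (false, -2) :: (true, 1) :: (false, 1) :: (true, -(c' : ℤ)) :: T' := by simp [pushPair, push]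
        rw [hW]
        refine ⟨⟨?_, ?_⟩, 1, (false, 1) :: (true, -(c' : ℤ)) :: T', by omega, ?_, ?_⟩
        · exact List.isChain_cons_cons.mpr ⟨by simp, List.isChain_cons_cons.mpr ⟨by simp, hch⟩⟩
        · intro p hp
          rcases List.mem_cons.mp hp with rfl | hp
          · exact ⟨by norm_num, by simp⟩
          rcases List.mem_cons.mp hp with rfl | hp
          · exact ⟨by norm_num, fun _ => by norm_num; omega⟩
          rcases List.mem_cons.mp hp with rfl | hp
          · exact ⟨by norm_num, by simp⟩
          rcases List.mem_cons.mp hp with rfl | hp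
          · exact hval _ (by simp)
          exact hval p (by simp [hp])
        · norm_num
        · rfl
      · -- g = (false, true), g' = (true, true)
        obtain ⟨c', T', hc', heq, hrep⟩ := hsh
        rw [heq] at hch hval
        rw [WL_cons, heq]
        have h0 : (1 : ℤ) + (c' : ℤ) ≠ 0 := by omega
        have hW : pushPair (false, true) ((true, (c' : ℤ)) :: T') =
            (false, -2) :: (true, ((c' + 1 : ℕ) : ℤ)) :: T' := by simp [pushPair, push, h0] <;> omega
        rw [hW]
        have hrepL : ((sgn ((false, true) :: (true, true) :: P')).drop 1).take (2 * (c' + 1) - 1) =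
            List.replicate (2 * (c' + 1) - 1) true := by
          have e1 : 2 * (c' + 1) - 1 = 2 * c' + 1 := by omega
          rw [e1]
          simp only [sgn_cons] at hrep ⊢
          simp [List.take_succ_cons, List.drop_succ_cons, List.replicate_succ, hrep]
        have hb : 2 * (c' + 1) - 1 ≤ n := hSL 1 (2 * (c' + 1) - 1) true hrepL
        refine ⟨⟨?_, ?_⟩, c' + 1, T', by omega, ?_, ?_⟩
        · exact List.isChain_cons_cons.mpr ⟨by simp, chain'_shift hch⟩
        · intro p hp
          rcases List.mem_cons.mp hp with rfl | hp
          · exact ⟨by norm_num, by simp⟩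
          rcases List.mem_cons.mp hp with rfl | hp
          · exact ⟨by omega, fun _ => by omega⟩
          exact hval p (by simp [hp])
        · rfl
        · exact hrepL
      · -- g = (true, false), g' = (false, false)
        obtain ⟨c', T', hc', heq, hrep⟩ := hsh
        rw [heq] at hch hval
        rw [WL_cons, heq]
        have h0 : (-1 : ℤ) + -(c' : ℤ) ≠ 0 := by omega
        have hW : pushPair (true, false) ((false, -1) :: (true, -(c' : ℤ)) :: T') =
            (false, 1) :: (true, -((c' + 1 : ℕ) : ℤ)) :: T' := by simp [pushPair, push, h0] <;> omega
        rw [hW]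
        have hrepL : ((sgn ((true, false) :: (false, false) :: P')).drop 1).take (2 * (c' + 1) - 1) =
            List.replicate (2 * (c' + 1) - 1) false := by
          have e1 : 2 * (c' + 1) - 1 = 2 * c' + 1 := by omega
          rw [e1]
          simp only [sgn_cons] at hrep ⊢
          simp [List.take_succ_cons, List.drop_succ_cons, List.replicate_succ, hrep]
        have hb : 2 * (c' + 1) - 1 ≤ n := hSL 1 (2 * (c' + 1) - 1) false hrepL
        refine ⟨⟨?_, ?_⟩, c' + 1, T', by omega, ?_, ?_⟩
        · exact List.isChain_cons_cons.mpr ⟨by simp, chain'_shift (List.isChain_cons_cons.mp hch).2⟩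
        · intro p hp
          rcases List.mem_cons.mp hp with rfl | hp
          · exact ⟨by norm_num, by simp⟩
          rcases List.mem_cons.mp hp with rfl | hp
          · exact ⟨by omega, fun _ => by omega⟩
          exact hval p (by simp [hp])
        · rfl
        · exact hrepL
      · -- g = (true, false), g' = (false, true)
        obtain ⟨c', T', hc', heq, hrep⟩ := hsh
        rw [heq] at hch hval
        rw [WL_cons, heq]
        have hW : pushPair (true, false) ((false, -2) :: (true, (c' : ℤ)) :: T') =
            (false, 1) :: (true, -1) :: (false, -1) :: (true, (c' : ℤ)) :: T' := by simp [pushPair, push]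
        rw [hW]
        refine ⟨⟨?_, ?_⟩, 1, (false, -1) :: (true, (c' : ℤ)) :: T', by omega, ?_, ?_⟩
        · exact List.isChain_cons_cons.mpr ⟨by simp, List.isChain_cons_cons.mpr ⟨by simp, List.isChain_cons_cons.mpr ⟨by simp, (List.isChain_cons_cons.mp hch).2⟩⟩⟩
        · intro p hp
          rcases List.mem_cons.mp hp with rfl | hp
          · exact ⟨by norm_num, by simp⟩
          rcases List.mem_cons.mp hp with rfl | hp
          · exact ⟨by norm_num, fun _ => by norm_num; omega⟩
          rcases List.mem_cons.mp hp with rfl | hp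
          · exact ⟨by norm_num, by simp⟩
          rcases List.mem_cons.mp hp with rfl | hp
          · exact hval _ (by simp)
          exact hval p (by simp [hp])
        · norm_num
        · rfl
      · -- g = (true, false), g' = (true, false)
        obtain ⟨c', T', hc', heq, hrep⟩ := hsh
        rw [heq] at hch hval
        rw [WL_cons, heq]
        have hW : pushPair (true, false) ((false, 1) :: (true, -(c' : ℤ)) :: T') =
            (false, 1) :: (true, -1) :: (false, 2) :: (true, -(c' : ℤ)) :: T' := by simp [pushPair, push]
        rw [hW]
        refine ⟨⟨?_, ?_⟩, 1, (false, 2) :: (true, -(c' : ℤ)) :: T', by omega, ?_, ?_⟩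
        · exact List.isChain_cons_cons.mpr ⟨by simp, List.isChain_cons_cons.mpr ⟨by simp, List.isChain_cons_cons.mpr ⟨by simp, (List.isChain_cons_cons.mp hch).2⟩⟩⟩
        · intro p hp
          rcases List.mem_cons.mp hp with rfl | hp
          · exact ⟨by norm_num, by simp⟩
          rcases List.mem_cons.mp hp with rfl | hp
          · exact ⟨by norm_num, fun _ => by norm_num; omega⟩
          rcases List.mem_cons.mp hp with rfl | hp
          · exact ⟨by norm_num, by simp⟩
          rcases List.mem_cons.mp hp with rfl | hp
          · exact hval _ (by simp)
          exact hval p (by simp [hp])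
        · norm_num
        · rfl
      · -- g = (true, false), g' = (true, true)
        obtain ⟨c', T', hc', heq, hrep⟩ := hsh
        rw [heq] at hch hval
        rw [WL_cons, heq]
        have hW : pushPair (true, false) ((true, (c' : ℤ)) :: T') =
            (false, 1) :: (true, -1) :: (false, 1) :: (true, (c' : ℤ)) :: T' := by simp [pushPair, push]
        rw [hW]
        refine ⟨⟨?_, ?_⟩, 1, (false, 1) :: (true, (c' : ℤ)) :: T', by omega, ?_, ?_⟩
        · exact List.isChain_cons_cons.mpr ⟨by simp, List.isChain_cons_cons.mpr ⟨by simp, List.isChain_cons_cons.mpr ⟨by simp, hch⟩⟩⟩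
        · intro p hp
          rcases List.mem_cons.mp hp with rfl | hp
          · exact ⟨by norm_num, by simp⟩
          rcases List.mem_cons.mp hp with rfl | hp
          · exact ⟨by norm_num, fun _ => by norm_num; omega⟩
          rcases List.mem_cons.mp hp with rfl | hp
          · exact ⟨by norm_num, by simp⟩
          rcases List.mem_cons.mp hp with rfl | hp
          · exact hval _ (by simp)
          exact hval p (by simp [hp])
        · norm_num
        · rfl
      · -- g = (true, true), g' = (false, false)
        obtain ⟨c', T', hc', heq, hrep⟩ := hsh
        rw [heq] at hch hval
        rw [WL_cons, heq]
        have hW : pushPair (true, true) ((false, -1) :: (true, -(c' : ℤ)) :: T') =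
            (true, 1) :: (false, -1) :: (true, -(c' : ℤ)) :: T' := by simp [pushPair, push]
        rw [hW]
        refine ⟨⟨?_, ?_⟩, 1, (false, -1) :: (true, -(c' : ℤ)) :: T', by omega, ?_, ?_⟩
        · exact List.isChain_cons_cons.mpr ⟨by simp, hch⟩
        · intro p hp
          rcases List.mem_cons.mp hp with rfl | hp
          · exact ⟨by norm_num, fun _ => by norm_num; omega⟩
          exact hval p (by simp [hp])
        · norm_num
        · rfl
      · -- g = (true, true), g' = (false, true)
        obtain ⟨c', T', hc', heq, hrep⟩ := hsh
        rw [heq] at hch hval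
        rw [WL_cons, heq]
        have hW : pushPair (true, true) ((false, -2) :: (true, (c' : ℤ)) :: T') =
            (true, 1) :: (false, -2) :: (true, (c' : ℤ)) :: T' := by simp [pushPair, push]
        rw [hW]
        refine ⟨⟨?_, ?_⟩, 1, (false, -2) :: (true, (c' : ℤ)) :: T', by omega, ?_, ?_⟩
        · exact List.isChain_cons_cons.mpr ⟨by simp, hch⟩
        · intro p hp
          rcases List.mem_cons.mp hp with rfl | hp
          · exact ⟨by norm_num, fun _ => by norm_num; omega⟩
          exact hval p (by simp [hp])
        · norm_num
        · rfl
      · -- g = (true, true), g' = (true, false)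
        obtain ⟨c', T', hc', heq, hrep⟩ := hsh
        rw [heq] at hch hval
        rw [WL_cons, heq]
        have hW : pushPair (true, true) ((false, 1) :: (true, -(c' : ℤ)) :: T') =
            (true, 1) :: (false, 1) :: (true, -(c' : ℤ)) :: T' := by simp [pushPair, push]
        rw [hW]
        refine ⟨⟨?_, ?_⟩, 1, (false, 1) :: (true, -(c' : ℤ)) :: T', by omega, ?_, ?_⟩
        · exact List.isChain_cons_cons.mpr ⟨by simp, hch⟩
        · intro p hp
          rcases List.mem_cons.mp hp with rfl | hp
          · exact ⟨by norm_num, fun _ => by norm_num; omega⟩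
          exact hval p (by simp [hp])
        · norm_num
        · rfl
      · -- g = (true, true), g' = (true, true)
        obtain ⟨c', T', hc', heq, hrep⟩ := hsh
        rw [heq] at hch hval
        rw [WL_cons, heq]
        have h0 : (1 : ℤ) + (c' : ℤ) ≠ 0 := by omega
        have hW : pushPair (true, true) ((true, (c' : ℤ)) :: T') =
            (true, ((c' + 1 : ℕ) : ℤ)) :: T' := by simp [pushPair, push, h0] <;> omega
        rw [hW]
        have hrepL : (sgn ((true, true) :: (true, true) :: P')).take (2 * (c' + 1)) =
            List.replicate (2 * (c' + 1)) true := by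
          have e1 : 2 * (c' + 1) = 2 * c' + 1 + 1 := by ring
          rw [e1]
          simp only [sgn_cons] at hrep ⊢
          simp [List.take_succ_cons, List.replicate_succ, hrep]
        have hb : 2 * (c' + 1) ≤ n := hSL 0 (2 * (c' + 1)) true (by simpa using hrepL)
        refine ⟨⟨?_, ?_⟩, c' + 1, T', by omega, ?_, ?_⟩
        · exact chain'_shift hch
        · intro p hp
          rcases List.mem_cons.mp hp with rfl | hp
          · exact ⟨by omega, fun _ => by omega⟩
          exact hval p (by simp [hp])
        · rfl
        · exact hrepL



end AltWordProof
namespace AltWordProof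

lemma sg_ne_one (n : ℕ) (hn : 2 ≤ n) (i : Bool) (x : ℤ) (hx : x ≠ 0)
    (hb : i = true → x.natAbs < n) : sg n (i, x) ≠ 1 := by
  have h := prodW_ne_one n hn [(i, x)] (by simp) (by simp [List.Chain'])
    (by intro p hp; simp only [List.mem_cons, List.not_mem_nil, or_false] at hp; subst hp
        exact ⟨hx, hb⟩)
  simpa [prodW] using h

/-- core nontriviality for a base-alternating word starting with base `a`. -/
lemma key (n : ℕ) (hn : 2 ≤ n) (l : List Letter) (hl : l ≠ [])
    (hhead : ∀ x ∈ l.head?, x.1 = false)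
    (hrot : ∀ k, (l.rotate k).Chain' (fun x y : Letter => x.1 ≠ y.1))
    (hbl : ∀ j r (s : Bool), ((l.map Prod.snd).drop j).take r = List.replicate r s → r ≤ n) :
    FreeGroup.lift (fgen n) (FreeGroup.mk l) ≠ 1 := by
  have hchain : l.Chain' (fun x y : Letter => x.1 ≠ y.1) := by
    have := hrot 0; rwa [List.rotate_zero] at this
  rcases pairing l hchain hhead with ⟨P, rfl⟩ | ⟨P, e, rfl⟩
  · have hP : P ≠ [] := by rintro rfl; exact hl rfl
    have hSL : ∀ j r (s : Bool), ((sgn P).drop j).take r = List.replicate r s → r ≤ n := by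
      intro j r s h
      exact hbl j r s (by rwa [← sgn_eq])
    obtain ⟨⟨hch, hval⟩, hsh⟩ := main n hn P hSL
    have hne : WL P ≠ [] := by
      rcases P with _ | ⟨g, P'⟩
      · exact absurd rfl hP
      · rcases g with ⟨e, f⟩
        cases e <;> cases f <;>
          (obtain ⟨c, T, hc, heq, -⟩ := hsh; rw [heq]; simp)
    rw [lift_flat, ← WL_prod]
    exact prodW_ne_one n hn _ hne hch hval
  · rcases P with _ | ⟨g, P'⟩
    · -- l = [(false, e)]
      have hl2 : (flat [] ++ [((false : Bool), e)]) = [((false : Bool), e)] := rfl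
      rw [hl2, FreeGroup.lift_mk]
      cases e
      · simp only [List.map_cons, List.map_nil, List.prod_cons, List.prod_nil, cond, mul_one,
          fgen, sg_inv]
        exact sg_ne_one n hn false (-1) (by norm_num) (by simp)
      · simp only [List.map_cons, List.map_nil, List.prod_cons, List.prod_nil, cond, mul_one,
          fgen]
        exact sg_ne_one n hn false 1 (by norm_num) (by simp)
    · -- impossible: wrap-around has two consecutive base-a letters
      exfalso
      have hm : (flat (g :: P')).length ≤ (flat (g :: P') ++ [((false : Bool), e)]).length := by
        simp
      have hr := hrot (flat (g :: P')).length
      rw [List.rotate_eq_drop_append_take hm, List.drop_left, List.take_left] at hr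
      rcases g with ⟨ge, gf⟩
      rw [flat] at hr
      simp only [List.cons_append, List.nil_append, List.singleton_append] at hr
      simp only [List.Chain'] at hr; rw [List.isChain_cons_cons] at hr
      exact hr.1 rfl

end AltWordProof

open AltWordProof in
theorem alternating_word_nontrivial (n : ℕ) (hn : 2 ≤ n) (v : List Letter)
    (hne : v ≠ [])
    (hred : ∀ k : ℕ, List.Chain' (fun x y : Letter => ¬(x.1 = y.1 ∧ x.2 = !y.2))
      (v.rotate k))
    (halt : ∀ k : ℕ, List.Chain' (fun x y : Letter => x.1 ≠ y.1) (v.rotate k))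
    (hblock : ∀ k : ℕ, ∀ w : List Letter, w <+: v.rotate k →
      ((∀ x ∈ w, x.2 = true) ∨ (∀ x ∈ w, x.2 = false)) → w.length ≤ n) :
    PresentedGroup.mk ({heckoidRel n} : Set (FreeGroup Bool)) (FreeGroup.mk v) ≠ 1 := by
  intro hone
  have himg : ∀ k : ℕ, k ≤ v.length →
      FreeGroup.lift (fgen n) (FreeGroup.mk (v.rotate k)) = 1 := by
    intro k hk
    have h2 := mk_rotate_conj ({heckoidRel n} : Set (FreeGroup Bool)) v k hk hone
    have h3 := phi_mk n (FreeGroup.mk (v.rotate k))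
    rw [h2, map_one] at h3
    exact h3.symm
  have hbl : ∀ (k : ℕ), ∀ j r (s : Bool),
      (((v.rotate k).map Prod.snd).drop j).take r = List.replicate r s → r ≤ n := by
    intro k j r s h
    rcases le_or_gt j (v.rotate k).length with hj | hj
    · set l := v.rotate k with hl
      set w := (l.drop j).take r with hw
      have hmap : w.map Prod.snd = List.replicate r s := by
        rw [hw, List.map_take, List.map_drop, h]
      have hlen : w.length = r := by
        have := congrArg List.length hmap
        simpa using this
      have hpref : w <+: v.rotate (k + j) := by
        rw [← List.rotate_rotate, ← hl, List.rotate_eq_drop_append_take hj]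
        exact (List.take_prefix r (l.drop j)).trans (List.prefix_append _ _)
      have hcond : (∀ x ∈ w, x.2 = true) ∨ (∀ x ∈ w, x.2 = false) := by
        cases s
        · right
          intro x hx
          have hx2 : x.2 ∈ w.map Prod.snd := List.mem_map_of_mem hx
          rw [hmap] at hx2
          exact List.eq_of_mem_replicate hx2
        · left
          intro x hx
          have hx2 : x.2 ∈ w.map Prod.snd := List.mem_map_of_mem hx
          rw [hmap] at hx2
          exact List.eq_of_mem_replicate hx2
      have := hblock (k + j) w hpref hcond
      rwa [hlen] at this
    · have hd : (((v.rotate k).map Prod.snd).drop j) = [] := by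
        apply List.drop_eq_nil_of_le
        simpa using hj.le
      rw [hd, List.take_nil] at h
      have := congrArg List.length h
      simp only [List.length_nil, List.length_replicate] at this
      omega
  rcases v with _ | ⟨⟨xc, xs⟩, t⟩
  · exact hne rfl
  rcases t with _ | ⟨⟨yc, ys⟩, t'⟩
  · -- singleton
    have h0 := himg 0 (by simp)
    rw [List.rotate_zero] at h0
    cases xc
    · exact key n hn [((false : Bool), xs)] (by simp) (by simp) halt
        (fun j r s h => hbl 0 j r s (by rwa [List.rotate_zero])) h0
    · refine absurd h0 ?_
      rw [FreeGroup.lift_mk]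
      cases xs
      · simp only [List.map_cons, List.map_nil, List.prod_cons, List.prod_nil, cond, mul_one,
          fgen, mul_inv_rev, sg_inv]
        have h := prodW_ne_one n hn [((true : Bool), -1), ((false : Bool), 1)] (by simp)
          (by simp [List.Chain'])
          (by intro p hp
              simp only [List.mem_cons, List.not_mem_nil, or_false] at hp
              rcases hp with rfl | rfl
              · exact ⟨by norm_num, fun _ => by norm_num; omega⟩
              · exact ⟨by norm_num, by simp⟩)
        simpa [prodW] using h
      · simp only [List.map_cons, List.map_nil, List.prod_cons, List.prod_nil, cond, mul_one,
          fgen]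
        have h := prodW_ne_one n hn [((false : Bool), -1), ((true : Bool), 1)] (by simp)
          (by simp [List.Chain'])
          (by intro p hp
              simp only [List.mem_cons, List.not_mem_nil, or_false] at hp
              rcases hp with rfl | rfl
              · exact ⟨by norm_num, by simp⟩
              · exact ⟨by norm_num, fun _ => by norm_num; omega⟩)
        simpa [prodW] using h
  · -- at least two letters
    have hchain0 := halt 0
    rw [List.rotate_zero] at hchain0; simp only [List.Chain'] at hchain0; rw [List.isChain_cons_cons] at hchain0
    cases xc
    · have h0 := himg 0 (by simp)
      rw [List.rotate_zero] at h0
      exact key n hn (((false : Bool), xs) :: (yc, ys) :: t') (by simp) (by simp) halt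
        (fun j r s h => hbl 0 j r s (by rwa [List.rotate_zero])) h0
    · have hyc : yc = false := by
        cases hb : yc
        · rfl
        · exact absurd (by rw [hb]) hchain0.1
      subst hyc
      have hrotv : (((true : Bool), xs) :: ((false : Bool), ys) :: t').rotate 1 =
          (((false : Bool), ys) :: t') ++ [((true : Bool), xs)] := by
        rw [show (1 : ℕ) = 0 + 1 from rfl, List.rotate_cons_succ, List.rotate_zero]
      have h1 := himg 1 (by simp)
      rw [hrotv] at h1
      refine key n hn ((((false : Bool), ys) :: t') ++ [((true : Bool), xs)]) (by simp)
        (by simp) (fun k => ?_) (fun j r s h => hbl 1 j r s (by rwa [hrotv])) h1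
      have hh := halt (1 + k)
      rw [← List.rotate_rotate, hrotv] at hh
      exact hh
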